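/- (Relative-to-absolute obstruction theory by cone construction.) Let f₂ : M → N and f₁ : N → B be morphisms with f = f₁∘f₂, and suppose α₁ : F₁• → L•_{f₁} and α₂ : F₂• → L•_{f₂} are perfect relative obstruction theories (each h⁰ an isomorphism and h^{−1} an epimorphism, amplitude [−1,0]), fitting in a commutative square F₂•[−1] → Lf₂*F₁• over L•_{f₂}[−1] → Lf₂*L•_{f₁}. Then the induced map on cones α₃ : F• := Cone(F₂•[−1] → Lf₂*F₁•) → L•_f satisfies: h⁰(α₃) is an isomorphism and h^{−1}(α₃) is an epimorphism, and F• is perfect of amplitude [−1,0]; hence α₃ is a perfect relative obstruction theory for f. -/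

import Mathlib

open CategoryTheory CategoryTheory.Limits CategoryTheory.Pretriangulated

section Helpers

variable {C D : Type*} [Category C] [Category D] [Preadditive C]
    [HasZeroObject C] [HasShift C ℤ] [∀ n : ℤ, (shiftFunctor C n).Additive]
    [Pretriangulated C] [Abelian D]
    (H : C ⥤ D) [H.IsHomological]

/-- The four-term row obtained by applying `H` to a triangle. -/
noncomputable def stmt16Row (T : Triangle C) : ComposableArrows D 3 :=
  ComposableArrows.mk₃ (H.map T.mor₁) (H.map T.mor₂) (H.map T.mor₃)

lemma stmt16Row_exact {T : Triangle C} (hT : T ∈ distTriang C) : (stmt16Row H T).Exact := by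
  have E0 := H.map_distinguished_exact T hT
  have E1 := H.map_distinguished_exact _ (rot_of_distTriang T hT)
  have z0 : H.map T.mor₁ ≫ H.map T.mor₂ = 0 := by
    rw [← H.map_comp, comp_distTriang_mor_zero₁₂ T hT, H.map_zero]
  have z1 : H.map T.mor₂ ≫ H.map T.mor₃ = 0 := by
    rw [← H.map_comp, comp_distTriang_mor_zero₂₃ T hT, H.map_zero]
  refine ComposableArrows.Exact.mk (ComposableArrows.IsComplex.mk ?_) ?_
  · intro i hi
    have hi2 : i ≤ 1 := by omega
    interval_cases i
    · exact z0
    · exact z1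
  · intro i hi
    have hi2 : i ≤ 1 := by omega
    interval_cases i
    · exact E0
    · exact E1

end Helpers
section Helpers2

variable {C D : Type*} [Category C] [Category D] [Preadditive C]
    [HasZeroObject C] [HasShift C ℤ] [∀ n : ℤ, (shiftFunctor C n).Additive]
    [Pretriangulated C] [Abelian D]
    (H : C ⥤ D) [H.IsHomological]

/-- The morphism of rows induced by a morphism of triangles. -/
noncomputable def stmt16RowMap {T T' : Triangle C} (φ : T ⟶ T') :
    stmt16Row H T ⟶ stmt16Row H T' :=
  ComposableArrows.homMk₃ (H.map φ.hom₁) (H.map φ.hom₂) (H.map φ.hom₃)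
    (H.map (φ.hom₁⟦(1 : ℤ)⟧'))
    (by show H.map T.mor₁ ≫ H.map φ.hom₂ = H.map φ.hom₁ ≫ H.map T'.mor₁
        rw [← H.map_comp, ← H.map_comp, φ.comm₁])
    (by show H.map T.mor₂ ≫ H.map φ.hom₃ = H.map φ.hom₂ ≫ H.map T'.mor₂
        rw [← H.map_comp, ← H.map_comp, φ.comm₂])
    (by show H.map T.mor₃ ≫ H.map (φ.hom₁⟦(1 : ℤ)⟧') = H.map φ.hom₃ ≫ H.map T'.mor₃
        rw [← H.map_comp, ← H.map_comp, φ.comm₃])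

lemma stmt16_mono {T T' : Triangle C} (hT : T ∈ distTriang C) (hT' : T' ∈ distTriang C)
    (φ : T ⟶ T') (h0 : Epi (H.map φ.hom₁)) (h1 : Mono (H.map φ.hom₂))
    (h3 : Mono (H.map (φ.hom₁⟦(1 : ℤ)⟧'))) : Mono (H.map φ.hom₃) :=
  CategoryTheory.Abelian.mono_of_epi_of_mono_of_mono (stmt16RowMap H φ)
    (stmt16Row_exact H hT) (stmt16Row_exact H hT') h0 h1 h3

/-- Rotation of a triangle morphism. -/
noncomputable def stmt16Rot {T T' : Triangle C} (φ : T ⟶ T') :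
    T.rotate ⟶ T'.rotate where
  hom₁ := φ.hom₂
  hom₂ := φ.hom₃
  hom₃ := φ.hom₁⟦(1 : ℤ)⟧'
  comm₁ := φ.comm₂
  comm₂ := φ.comm₃
  comm₃ := by
    dsimp [Triangle.rotate]
    change (-((shiftFunctor C (1 : ℤ)).map T.mor₁)) ≫ (shiftFunctor C (1 : ℤ)).map φ.hom₂ =
      (shiftFunctor C (1 : ℤ)).map φ.hom₁ ≫ (-((shiftFunctor C (1 : ℤ)).map T'.mor₁))
    rw [Preadditive.neg_comp, Preadditive.comp_neg, ← Functor.map_comp, ← Functor.map_comp,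
      φ.comm₁]

lemma stmt16_epi {T T' : Triangle C} (hT : T ∈ distTriang C) (hT' : T' ∈ distTriang C)
    (φ : T ⟶ T') (h0 : Epi (H.map φ.hom₂)) (h2 : Epi (H.map (φ.hom₁⟦(1 : ℤ)⟧')))
    (h3 : Mono (H.map (φ.hom₂⟦(1 : ℤ)⟧'))) : Epi (H.map φ.hom₃) :=
  CategoryTheory.Abelian.epi_of_epi_of_epi_of_mono (stmt16RowMap H (stmt16Rot φ))
    (stmt16Row_exact H (rot_of_distTriang T hT)) (stmt16Row_exact H (rot_of_distTriang T' hT'))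
    h0 h2 h3

end Helpers2
section Helpers3

variable {C D : Type*} [Category C] [Category D] [Preadditive C]
    [HasZeroObject C] [HasShift C ℤ] [∀ n : ℤ, (shiftFunctor C n).Additive]
    [Pretriangulated C] [Abelian D]
    (H : C ⥤ D)

lemma stmt16_conj {X Y : C} (u : X ⟶ Y) (m n : ℤ) (h : m + n = 0) :
    H.map ((u⟦m⟧')⟦n⟧') =
      H.map ((shiftFunctorCompIsoId C m n h).hom.app X) ≫ H.map u ≫
        H.map ((shiftFunctorCompIsoId C m n h).inv.app Y) := by
  rw [← H.map_comp, ← H.map_comp]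
  congr 1
  have hn := (shiftFunctorCompIsoId C m n h).hom.naturality u
  dsimp at hn
  rw [← cancel_mono ((shiftFunctorCompIsoId C m n h).hom.app Y), hn]
  simp

lemma stmt16_conj_isIso {X Y : C} (u : X ⟶ Y) (m n : ℤ) (h : m + n = 0)
    (hu : IsIso (H.map u)) : IsIso (H.map ((u⟦m⟧')⟦n⟧')) := by
  rw [stmt16_conj H u m n h]
  infer_instance

lemma stmt16_conj_epi {X Y : C} (u : X ⟶ Y) (m n : ℤ) (h : m + n = 0)
    (hu : Epi (H.map u)) : Epi (H.map ((u⟦m⟧')⟦n⟧')) := by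
  rw [stmt16_conj H u m n h]
  exact epi_comp _ _

omit [Preadditive C] [HasZeroObject C] [HasShift C ℤ]
  [∀ n : ℤ, (shiftFunctor C n).Additive] [Pretriangulated C] [Abelian D] in
lemma stmt16_mono_of_isZero [Abelian D] {X Y : D} (f : X ⟶ Y) (hX : IsZero X) : Mono f :=
  ⟨fun g h _ => hX.eq_of_tgt g h⟩

end Helpers3

/-- Relative-to-absolute obstruction theory by the cone construction,
stated in a triangulated category with a homological functor `H` (with the
convention `H^n(X) := H(X⟦n⟧)`, so an object/morphism "in amplitude `[−1,0]`" has
`H^n = 0` for `n ∉ {−1,0}`, and an obstruction theory `α : F• → L•` satisfies: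
`H⁰(α)` is an isomorphism and `H⁻¹(α)` an epimorphism). Given perfect relative
obstruction theories `α₁ : F₁• → L•_{f₁}`, `α₂ : F₂• → L•_{f₂}` fitting in a
commutative square `F₂•[−1] → Lf₂*F₁•` over `L•_{f₂}[−1] → Lf₂*L•_{f₁}` and
completed to a morphism of distinguished triangles with cone map
`α₃ : F• := Cone(F₂•[−1] → Lf₂*F₁•) → L•_f`, the map `α₃` satisfies:
`H⁰(α₃)` is an isomorphism, `H⁻¹(α₃)` is an epimorphism, and `F•` is perfect of
amplitude `[−1,0]`; hence `α₃` is a perfect relative obstruction theory for `f`. -/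
theorem stmt16 {C D : Type*} [Category C] [Category D] [Preadditive C]
    [HasZeroObject C] [HasShift C ℤ] [∀ n : ℤ, (shiftFunctor C n).Additive]
    [Pretriangulated C] [Abelian D]
    (H : C ⥤ D) [H.IsHomological]
    (F₂ F₁ Fc L₂ L₁ Lf : C)
    (rmap : F₂⟦(-1 : ℤ)⟧ ⟶ F₁) (a : F₁ ⟶ Fc) (b : Fc ⟶ (F₂⟦(-1 : ℤ)⟧)⟦(1 : ℤ)⟧)
    (j₂ : L₂⟦(-1 : ℤ)⟧ ⟶ L₁) (j₁ : L₁ ⟶ Lf) (j₃ : Lf ⟶ (L₂⟦(-1 : ℤ)⟧)⟦(1 : ℤ)⟧)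
    (hT₁ : Triangle.mk rmap a b ∈ distTriang C)
    (hT₂ : Triangle.mk j₂ j₁ j₃ ∈ distTriang C)
    (α₁ : F₁ ⟶ L₁) (α₂ : F₂ ⟶ L₂) (α₃ : Fc ⟶ Lf)
    (hc₁ : rmap ≫ α₁ = (shiftFunctor C (-1 : ℤ)).map α₂ ≫ j₂)
    (hc₂ : a ≫ α₃ = α₁ ≫ j₁)
    (hc₃ : α₃ ≫ j₃ = b ≫ ((shiftFunctor C (-1 : ℤ)).map α₂)⟦(1 : ℤ)⟧')
    (h0iso₁ : IsIso (H.map α₁)) (h0iso₂ : IsIso (H.map α₂))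
    (hm1epi₁ : Epi (H.map ((shiftFunctor C (-1 : ℤ)).map α₁)))
    (hm1epi₂ : Epi (H.map ((shiftFunctor C (-1 : ℤ)).map α₂)))
    (hamp₁ : ∀ n : ℤ, n ≠ 0 → n ≠ -1 → IsZero (H.obj (F₁⟦n⟧)))
    (hamp₂ : ∀ n : ℤ, n ≠ 0 → n ≠ -1 → IsZero (H.obj (F₂⟦n⟧))) :
    IsIso (H.map α₃) ∧ Epi (H.map ((shiftFunctor C (-1 : ℤ)).map α₃)) ∧
    (∀ n : ℤ, n ≠ 0 → n ≠ -1 → IsZero (H.obj (Fc⟦n⟧))) := by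
  
  haveI := h0iso₁
  haveI := h0iso₂
  let T₁ : Triangle C := Triangle.mk rmap a b
  let T₂ : Triangle C := Triangle.mk j₂ j₁ j₃
  let φ : T₁ ⟶ T₂ :=
    { hom₁ := (shiftFunctor C (-1 : ℤ)).map α₂
      hom₂ := α₁
      hom₃ := α₃
      comm₁ := hc₁
      comm₂ := hc₂
      comm₃ := hc₃.symm }
  -- Goal 1 : `H.map α₃` is an isomorphism
  have goal1 : IsIso (H.map α₃) := by
    have hmono : Mono (H.map α₃) := by
      refine stmt16_mono H hT₁ hT₂ φ hm1epi₂ (show Mono (H.map α₁) from inferInstance) ?_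
      haveI := stmt16_conj_isIso H α₂ (-1) 1 (by ring) h0iso₂
      exact (show Mono (H.map (((shiftFunctor C (-1 : ℤ)).map α₂)⟦(1 : ℤ)⟧')) from inferInstance)
    have hepi : Epi (H.map α₃) := by
      refine stmt16_epi H hT₁ hT₂ φ (show Epi (H.map α₁) from inferInstance)
        (stmt16_conj_epi H α₂ (-1) 1 (by ring) inferInstance) ?_
      exact stmt16_mono_of_isZero _ (hamp₁ 1 (by norm_num) (by norm_num))
    exact isIso_of_mono_of_epi _
  refine ⟨goal1, ?_, ?_⟩
  -- Goal 2 : `H.map (α₃⟦-1⟧')` is an epimorphism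
  · let φ' := (Triangle.shiftFunctor C (-1 : ℤ)).map φ
    have hT₁' : (Triangle.shiftFunctor C (-1 : ℤ)).obj T₁ ∈ distTriang C :=
      Triangle.shift_distinguished T₁ hT₁ (-1)
    have hT₂' : (Triangle.shiftFunctor C (-1 : ℤ)).obj T₂ ∈ distTriang C :=
      Triangle.shift_distinguished T₂ hT₂ (-1)
    have := stmt16_epi H hT₁' hT₂' φ' hm1epi₁
      (stmt16_conj_epi H ((shiftFunctor C (-1 : ℤ)).map α₂) (-1) 1 (by ring) hm1epi₂)
      (by
        haveI := stmt16_conj_isIso H α₁ (-1) 1 (by ring) h0iso₁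
        exact show Mono (H.map (((shiftFunctor C (-1 : ℤ)).map α₁)⟦(1 : ℤ)⟧')) from
          inferInstance)
    exact this
  -- Goal 3 : amplitude
  · intro n hn0 hn1
    have hTn : (Triangle.shiftFunctor C n).obj T₁ ∈ distTriang C :=
      Triangle.shift_distinguished T₁ hT₁ n
    have E := H.map_distinguished_exact _ (rot_of_distTriang _ hTn)
    have hz : IsZero (H.obj (((F₂⟦(-1 : ℤ)⟧)⟦n⟧)⟦(1 : ℤ)⟧)) := by
      refine (hamp₂ n hn0 hn1).of_iso (H.mapIso ?_)
      exact (shiftFunctor C (1 : ℤ)).mapIso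
          ((shiftFunctorAdd' C (-1) n (-1 + n) rfl).symm.app F₂) ≪≫
        (shiftFunctorAdd' C (-1 + n) 1 n (by ring)).symm.app F₂
    exact E.isZero_of_both_zeros
      ((hamp₁ n hn0 hn1).eq_of_src _ _) (hz.eq_of_tgt _ _)
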